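/- Let Λ_c(x,i) ∝ e^{E(x,θ^(i)) − c(i)} be a probability distribution on X × {1,…,d} (X finite, λ counting measure). The marginal of Λ_c on {1,…,d} is uniform if and only if c(i) − log Z(θ^(i)) is constant in i, where Z(θ^(i)) = ∑_x e^{E(x,θ^(i))}. -/

import Mathlib

open Real

theorem flat_histogram_characterization
    {X : Type*} [Fintype X] [Nonempty X]
    (d : ℕ) (hd : 0 < d) (e : X → Fin d → ℝ) (c : Fin d → ℝ)
    (Λ : X → Fin d → ℝ)
    (hΛ : ∀ x i, Λ x i =
      exp (e x i - c i) / (∑ x' : X, ∑ j, exp (e x' j - c j))) :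
    (∀ i, ∑ x : X, Λ x i = 1 / d) ↔
    (∃ K : ℝ, ∀ i, c i - log (∑ x : X, exp (e x i)) = K) := by
  haveI : NeZero d := ⟨hd.ne'⟩
  set S := ∑ x' : X, ∑ j, exp (e x' j - c j) with hSdef
  set Z : Fin d → ℝ := fun i => ∑ x : X, exp (e x i) with hZdef
  have hZpos : ∀ i, 0 < Z i := fun i =>
    Finset.sum_pos (fun x _ => exp_pos _) Finset.univ_nonempty
  have hterm : ∀ i, ∑ x : X, exp (e x i - c i) = Z i / exp (c i) := by
    intro i
    simp only [exp_sub, hZdef]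
    rw [Finset.sum_div]
  have hSalt : S = ∑ j, Z j / exp (c j) := by
    rw [hSdef, Finset.sum_comm]
    exact Finset.sum_congr rfl fun j _ => hterm j
  have hSpos : 0 < S := by
    rw [hSalt]
    exact Finset.sum_pos (fun j _ => div_pos (hZpos j) (exp_pos _))
      (Finset.univ_nonempty)
  have hsum : ∀ i, ∑ x : X, Λ x i = Z i / exp (c i) / S := by
    intro i
    simp only [hΛ, ← hSdef]
    rw [← Finset.sum_div, hterm]
  have hdpos : (0:ℝ) < d := Nat.cast_pos.mpr hd
  constructor
  · intro h
    refine ⟨log d - log S, fun i => ?_⟩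
    have hi := h i
    rw [hsum i] at hi
    have : Z i / exp (c i) = S / d := by
      field_simp at hi ⊢
      linarith [hi]
    have hlog : log (Z i / exp (c i)) = log (S / d) := by rw [this]
    rw [log_div (hZpos i).ne' (exp_pos _).ne', log_exp,
        log_div hSpos.ne' hdpos.ne'] at hlog
    have hZi : Z i = ∑ x : X, exp (e x i) := rfl
    rw [← hZi]
    linarith
  · rintro ⟨K, hK⟩ i
    have hci : ∀ j, exp (c j) = exp K * Z j := by
      intro j
      have := hK j
      have hZj : Z j = ∑ x : X, exp (e x j) := rfl
      have : c j = K + log (Z j) := by rw [hZj]; linarith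
      rw [this, exp_add, exp_log (hZpos j)]
    have hfrac : ∀ j, Z j / exp (c j) = exp (-K) := by
      intro j
      rw [hci j, exp_neg]
      field_simp
      ring_nf
      exact mul_inv_cancel₀ (hZpos j).ne'
    have hSval : S = d * exp (-K) := by
      rw [hSalt]
      simp [hfrac]
    rw [hsum i, hfrac i, hSval]
    rw [div_mul_eq_div_div_swap]
    rw [div_self (exp_pos _).ne']
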